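/- For a partition λ with at most M parts, the number of semistandard Young tableaux of shape λ with entries in {1,…,M} equals ∏_{1≤i<j≤M} (λ_i − λ_j + j − i)/(j − i). -/

import Mathlib

open Finset

/-- The set of cells of the Young diagram of the (1-indexed) partition `l`. -/
def youngCells (l : ℕ → ℕ) : Set (ℕ × ℕ) :=
  {p | 1 ≤ p.1 ∧ 1 ≤ p.2 ∧ p.2 ≤ l p.1}

/-- `T` is a semistandard Young tableau of shape `l` with entries in `{1,…,M}`:
rows weakly increase, columns strictly increase (and `T` is `0` outside the diagram). -/
def IsSSYT (l : ℕ → ℕ) (M : ℕ) (T : ℕ × ℕ → ℕ) : Prop :=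
  (∀ p ∈ youngCells l, T p ∈ Set.Icc 1 M) ∧
  (∀ i j : ℕ, (i, j) ∈ youngCells l → (i, j + 1) ∈ youngCells l →
      T (i, j) ≤ T (i, j + 1)) ∧
  (∀ i j : ℕ, (i, j) ∈ youngCells l → (i + 1, j) ∈ youngCells l →
      T (i, j) < T (i + 1, j)) ∧
  (∀ p : ℕ × ℕ, p ∉ youngCells l → T p = 0)

open Polynomial


noncomputable section

/-- the "tail" part of the Faulhaber polynomial -/
def qtail (p : ℕ) : ℚ[X] :=
  ∑ i ∈ Ioc 0 p, C ((_root_.bernoulli i) * ((p + 1).choose i)) * X ^ (p + 1 - i)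

/-- `(p+1) * (∑_{k<x} k^p)` as a monic polynomial of degree `p+1`. -/
def qpoly (p : ℕ) : ℚ[X] := X ^ (p + 1) + qtail p

/-- Power sum `G p m = ∑_{k < m} k^p`. -/
def psum (p m : ℕ) : ℚ := ∑ k ∈ range m, (k : ℚ) ^ p

lemma qpoly_eval (p m : ℕ) : (qpoly p).eval (m : ℚ) = (p + 1 : ℚ) * psum p m := by
  have h := sum_range_pow m p
  have h2 : (p + 1 : ℚ) * psum p m
      = ∑ i ∈ range (p + 1), (_root_.bernoulli i) * ((p + 1).choose i) * (m : ℚ) ^ (p + 1 - i) := by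
    rw [psum, h, Finset.mul_sum]
    refine Finset.sum_congr rfl fun i _ => ?_
    have : ((p : ℚ) + 1) ≠ 0 := by positivity
    field_simp
  rw [h2, qpoly, qtail]
  rw [Finset.range_eq_Ico, show Ico 0 (p+1) = insert 0 (Ioc 0 p) by
    ext x; simp [Nat.lt_succ_iff]]
  rw [Finset.sum_insert (by simp)]
  simp [_root_.bernoulli_zero, Polynomial.eval_finset_sum]

lemma qtail_degree (p : ℕ) : (qtail p).degree < (p + 1 : ℕ) := by
  apply lt_of_le_of_lt (Polynomial.degree_sum_le _ _)
  apply Finset.sup_lt_iff (by exact_mod_cast WithBot.bot_lt_coe (p+1)) |>.mpr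
  intro i hi
  simp only [mem_Ioc] at hi
  apply lt_of_le_of_lt (Polynomial.degree_C_mul_X_pow_le _ _)
  rw [Nat.cast_lt]
  omega

lemma qpoly_monic (p : ℕ) : (qpoly p).Monic :=
  Polynomial.monic_X_pow_add (qtail_degree p)

lemma qpoly_natDegree (p : ℕ) : (qpoly p).natDegree = p + 1 := by
  have : (qpoly p).degree = (p + 1 : ℕ) := by
    rw [qpoly, Polynomial.degree_add_eq_left_of_degree_lt]
    · exact Polynomial.degree_X_pow _
    · rw [Polynomial.degree_X_pow]; exact qtail_degree p
  exact Polynomial.natDegree_eq_of_degree_eq_some this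

end

section Det
open Matrix

lemma psum_sub {p u v : ℕ} (h : u < v) :
    psum p v - psum p u = ∑ t ∈ Icc u (v - 1), (t : ℚ) ^ p := by
  rw [psum, psum, ← Finset.sum_Ico_eq_sub _ h.le]
  congr 1
  rw [← Finset.Ico_add_one_right_eq_Icc]
  congr 1
  omega

lemma det_sum_pow (n : ℕ) (A : Fin n → Finset ℕ) :
    Matrix.det (Matrix.of fun i j : Fin n => ∑ t ∈ A i, (t : ℚ) ^ (j : ℕ))
      = ∑ b ∈ Fintype.piFinset A, Matrix.det (Matrix.vandermonde fun i => (b i : ℚ)) := by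
  classical
  have h := (Matrix.detRowAlternating (R := ℚ) (n := Fin n)).toMultilinearMap.map_sum_finset
    (g := fun (i : Fin n) (t : ℕ) => fun j : Fin n => (t : ℚ) ^ (j : ℕ)) (A := A)
  have lhs : (Matrix.detRowAlternating (R := ℚ) (n := Fin n)).toMultilinearMap
      (fun i => ∑ t ∈ A i, fun j : Fin n => (t : ℚ) ^ (j : ℕ))
      = Matrix.det (Matrix.of fun i j : Fin n => ∑ t ∈ A i, (t : ℚ) ^ (j : ℕ)) := by
    show Matrix.detRowAlternating _ = _
    congr 1
    funext i j
    simp [Matrix.of_apply, Finset.sum_apply]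
  rw [lhs] at h
  rw [h]
  rfl

lemma vandermonde_sum (n : ℕ) (a : Fin (n + 1) → ℕ)
    (ha : ∀ i : Fin n, a i.castSucc < a i.succ) :
    Matrix.det (Matrix.vandermonde fun i => (a i : ℚ))
      = (Nat.factorial n : ℚ) * ∑ b ∈ Fintype.piFinset
            (fun i : Fin n => Icc (a i.castSucc) (a i.succ - 1)),
          Matrix.det (Matrix.vandermonde fun i => (b i : ℚ)) := by
  classical
  set P : Fin (n + 1) → ℚ[X] :=
    fun j => if j = 0 then 1 else qpoly ((j : ℕ) - 1) with hP
  have h_deg : ∀ j, (P j).natDegree = j := by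
    intro j
    rcases eq_or_ne j 0 with rfl | hj
    · simp [hP]
    · have : (j : ℕ) ≠ 0 := fun h => hj (Fin.ext h)
      simp only [hP, if_neg hj, qpoly_natDegree]
      omega
  have h_monic : ∀ j, (P j).Monic := by
    intro j
    rcases eq_or_ne j 0 with rfl | hj
    · simp [hP, Polynomial.monic_one]
    · simp only [hP, if_neg hj]; exact qpoly_monic _
  have step1 := Matrix.det_eval_matrixOfPolynomials_eq_det_vandermonde
    (fun i => (a i : ℚ)) P h_deg h_monic
  -- column scaling
  set B' : Matrix (Fin (n+1)) (Fin (n+1)) ℚ :=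
    Matrix.of (fun i j => if j = 0 then 1 else psum ((j : ℕ) - 1) (a i)) with hB'
  have step2 : Matrix.det (Matrix.of fun i j => (P j).eval ((a i : ℚ)))
      = (∏ j : Fin (n+1), if j = 0 then (1:ℚ) else ((j : ℕ) : ℚ)) * Matrix.det B' := by
    rw [← Matrix.det_mul_row]
    congr 1
    ext i j
    rcases eq_or_ne j 0 with rfl | hj
    · simp [hP, hB']
    · have hj' : (j : ℕ) ≠ 0 := fun h => hj (Fin.ext h)
      simp only [hP, hB', Matrix.of_apply, if_neg hj, qpoly_eval]
      have : (((j : ℕ) - 1 : ℕ) : ℚ) + 1 = ((j : ℕ) : ℚ) := by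
        have : 1 ≤ (j : ℕ) := Nat.one_le_iff_ne_zero.mpr hj'
        push_cast [Nat.cast_sub this]
        ring
      rw [this]
  have step3 : (∏ j : Fin (n+1), if j = 0 then (1:ℚ) else ((j : ℕ) : ℚ)) = (Nat.factorial n : ℚ) := by
    rw [Fin.prod_univ_succ]
    simp only [if_pos rfl, one_mul]
    have : ∀ j : Fin n, (if j.succ = 0 then (1:ℚ) else ((j.succ : ℕ) : ℚ))
        = ((j : ℕ) : ℚ) + 1 := by
      intro j
      rw [if_neg (Fin.succ_ne_zero j)]
      simp
    rw [Finset.prod_congr rfl (fun j _ => this j), Fin.prod_univ_eq_prod_range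
      (fun i => ((i : ℚ) + 1))]
    rw [show (fun i : ℕ => ((i : ℚ) + 1)) = (fun i : ℕ => (((i + 1 : ℕ)) : ℚ)) by
      funext i; push_cast; ring]
    rw [← Nat.cast_prod]
    simp [Finset.prod_range_add_one_eq_factorial]
  -- row differences
  set Cm : Matrix (Fin (n+1)) (Fin (n+1)) ℚ :=
    Matrix.of (fun i j => Fin.cases (B' 0 j) (fun k => B' k.succ j - B' k.castSucc j) i) with hCm
  have step4 : Matrix.det B' = Matrix.det Cm := by
    apply Matrix.det_eq_of_forall_row_eq_smul_add_pred (fun _ => 1)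
    · intro j; simp [hCm]
    · intro i j
      simp only [hCm, Matrix.of_apply, Fin.cases_succ]
      ring
  have step5 : Matrix.det Cm = Matrix.det (Cm.submatrix Fin.succ Fin.succ) := by
    rw [Matrix.det_succ_column_zero, Fin.sum_univ_succ]
    have h0 : Cm 0 0 = 1 := by simp [hCm, hB']
    have hsucc : ∀ i : Fin n, Cm i.succ 0 = 0 := by
      intro i
      simp [hCm, hB', Fin.succ_ne_zero]
    simp only [h0]
    rw [Finset.sum_eq_zero (fun i _ => by rw [hsucc]; ring)]
    simp [Fin.succAbove_zero]
  have step6 : Cm.submatrix Fin.succ Fin.succ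
      = Matrix.of (fun i j : Fin n => ∑ t ∈ Icc (a i.castSucc) (a i.succ - 1), (t : ℚ) ^ (j:ℕ)) := by
    ext i j
    simp only [Matrix.submatrix_apply, hCm, Matrix.of_apply, Fin.cases_succ, hB']
    rw [if_neg (Fin.succ_ne_zero j), if_neg (Fin.succ_ne_zero j)]
    have : ((j.succ : ℕ) - 1) = (j : ℕ) := by simp
    rw [this, psum_sub (ha i)]
  rw [step1, step2, step3, step4, step5, step6, det_sum_pow]

end Det

section Reindex

/-- Product over pairs `i < j` in `Fin M` expressed over `ℕ` ranges. -/
lemma fin_pairs_prod (M : ℕ) (g : ℕ → ℕ → ℚ) :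
    ∏ i : Fin M, ∏ j ∈ Ioi i, g (i : ℕ) (j : ℕ)
      = ∏ i ∈ range M, ∏ j ∈ Ico (i + 1) M, g i j := by
  have inner : ∀ i : Fin M, ∏ j ∈ Ioi i, g (i : ℕ) (j : ℕ)
      = ∏ j : Fin M, if (i:ℕ) < (j:ℕ) then g (i:ℕ) (j:ℕ) else 1 := by
    intro i
    rw [← Finset.prod_filter]
    congr 1
    ext j
    simp only [Finset.mem_Ioi, Finset.mem_filter, Finset.mem_univ, true_and,
      Fin.lt_iff_val_lt_val]
  have innerN : ∀ i : ℕ, ∏ j ∈ Ico (i + 1) M, g i j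
      = ∏ j ∈ range M, if i < j then g i j else 1 := by
    intro i
    rw [← Finset.prod_filter]
    congr 1
    ext j
    simp only [Finset.mem_Ico, Finset.mem_filter, Finset.mem_range]
    omega
  simp only [inner, innerN]
  rw [Fin.prod_univ_eq_prod_range (fun i => ∏ j : Fin M, if i < (j:ℕ) then g i (j:ℕ) else 1)]
  refine Finset.prod_congr rfl fun i _ => ?_
  rw [Fin.prod_univ_eq_prod_range (fun j => if i < j then g i j else 1)]

/-- Reindex the double product over `1 ≤ i < j ≤ M` by `k ↦ M - k`. -/
lemma prod_pairs_reindex (M : ℕ) (F : ℕ → ℕ → ℚ) :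
    ∏ j ∈ Icc 1 M, ∏ i ∈ Icc 1 (j - 1), F i j
      = ∏ i : Fin M, ∏ j ∈ Ioi i, F (M - (j : ℕ)) (M - (i : ℕ)) := by
  rw [fin_pairs_prod M (fun i j => F (M - j) (M - i))]
  rw [Finset.prod_sigma', Finset.prod_sigma']
  refine Finset.prod_nbij' (fun p => ⟨M - p.1, M - p.2⟩) (fun p => ⟨M - p.1, M - p.2⟩)
    ?_ ?_ ?_ ?_ ?_
  · rintro ⟨j, i⟩ hp
    simp only [Finset.mem_sigma, Finset.mem_Icc, Finset.mem_range, Finset.mem_Ico] at *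
    omega
  · rintro ⟨i, j⟩ hp
    simp only [Finset.mem_sigma, Finset.mem_Icc, Finset.mem_range, Finset.mem_Ico] at *
    omega
  · rintro ⟨j, i⟩ hp
    simp only [Finset.mem_sigma, Finset.mem_Icc] at hp
    simp only [Sigma.mk.inj_iff, heq_eq_eq]
    constructor <;> omega
  · rintro ⟨i, j⟩ hp
    simp only [Finset.mem_sigma, Finset.mem_range, Finset.mem_Ico] at hp
    simp only [Sigma.mk.inj_iff, heq_eq_eq]
    constructor <;> omega
  · rintro ⟨j, i⟩ hp
    simp only [Finset.mem_sigma, Finset.mem_Icc] at hp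
    have h1 : M - (M - i) = i := by omega
    have h2 : M - (M - j) = j := by omega
    simp only []
    rw [h1, h2]

end Reindex

section DForm

/-- abbreviation for the product side -/
def Dprod (M : ℕ) (l : ℕ → ℕ) : ℚ :=
  ∏ j ∈ Icc 1 M, ∏ i ∈ Icc 1 (j - 1),
    ((l i : ℚ) - (l j : ℚ) + (j : ℚ) - (i : ℚ)) / ((j : ℚ) - (i : ℚ))

/-- Vandermonde-type pair product. -/
def vd (M : ℕ) (x : Fin M → ℚ) : ℚ := ∏ i : Fin M, ∏ j ∈ Ioi i, (x j - x i)

lemma vd_eq_det (M : ℕ) (x : Fin M → ℚ) :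
    vd M x = Matrix.det (Matrix.vandermonde x) := (Matrix.det_vandermonde x).symm

/-- superfactorial-type denominator -/
def sfQ (M : ℕ) : ℚ := vd M (fun i => (i : ℚ))

lemma sfQ_pos (M : ℕ) : 0 < sfQ M := by
  rw [sfQ, vd]
  apply Finset.prod_pos
  intro i _
  apply Finset.prod_pos
  intro j hj
  simp only [Finset.mem_Ioi, Fin.lt_iff_val_lt_val] at hj
  have : ((i:ℕ) : ℚ) < ((j:ℕ) : ℚ) := by exact_mod_cast hj
  linarith

lemma D_eq (M : ℕ) (l : ℕ → ℕ) :
    Dprod M l = vd M (fun i => ((l (M - (i:ℕ)) + (i:ℕ) : ℕ) : ℚ)) / sfQ M := by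
  rw [Dprod, prod_pairs_reindex M
    (fun i j => ((l i : ℚ) - (l j : ℚ) + (j : ℚ) - (i : ℚ)) / ((j : ℚ) - (i : ℚ)))]
  rw [vd, sfQ, vd, ← Finset.prod_div_distrib]
  refine Finset.prod_congr rfl fun i _ => ?_
  rw [← Finset.prod_div_distrib]
  refine Finset.prod_congr rfl fun j hj => ?_
  simp only [Finset.mem_Ioi, Fin.lt_iff_val_lt_val] at hj
  have hjM : (j : ℕ) < M := j.isLt
  have hiM : (i : ℕ) < M := i.isLt
  have c1 : ((M - (i:ℕ) : ℕ) : ℚ) = (M : ℚ) - (i:ℕ) := by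
    rw [Nat.cast_sub hiM.le]
  have c2 : ((M - (j:ℕ) : ℕ) : ℚ) = (M : ℚ) - (j:ℕ) := by
    rw [Nat.cast_sub hjM.le]
  push_cast [c1, c2]
  ring_nf

lemma natprod_factorial (n : ℕ) : ∏ i ∈ range n, (n - i) = Nat.factorial n := by
  have := Finset.prod_range_reflect (fun j => j + 1) n
  rw [Finset.prod_range_add_one_eq_factorial] at this
  rw [← this]
  refine Finset.prod_congr rfl fun i hi => ?_
  simp only [Finset.mem_range] at hi
  omega

lemma sfQ_succ (n : ℕ) : sfQ (n + 1) = sfQ n * (Nat.factorial n : ℚ) := by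
  rw [sfQ, sfQ, vd, vd, fin_pairs_prod (n+1) (fun i j => (j : ℚ) - (i : ℚ)),
    fin_pairs_prod n (fun i j => (j : ℚ) - (i : ℚ))]
  rw [Finset.prod_range_succ]
  rw [show Ico (n + 1) (n + 1) = ∅ by simp]
  rw [Finset.prod_empty, mul_one]
  have inner : ∀ i ∈ range n, ∏ j ∈ Ico (i+1) (n+1), ((j:ℚ) - (i:ℚ))
      = (∏ j ∈ Ico (i+1) n, ((j:ℚ) - (i:ℚ))) * ((n:ℚ) - (i:ℚ)) := by
    intro i hi
    simp only [Finset.mem_range] at hi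
    rw [Finset.prod_Ico_succ_top hi]
  rw [Finset.prod_congr rfl inner, Finset.prod_mul_distrib]
  congr 1
  have : ∀ i ∈ range n, ((n:ℚ) - (i:ℚ)) = ((n - i : ℕ) : ℚ) := by
    intro i hi
    simp only [Finset.mem_range] at hi
    rw [Nat.cast_sub hi.le]
  rw [Finset.prod_congr rfl this, ← Nat.cast_prod, natprod_factorial]

end DForm

section Key

/-- Extend a Fin-tuple to a shape function on ℕ (1-indexed rows 1..n). -/
def extFun (l : ℕ → ℕ) (n : ℕ) (μ : Fin n → ℕ) : ℕ → ℕ :=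
  fun k => if hk : 1 ≤ k ∧ k ≤ n then μ ⟨k - 1, by omega⟩ else if k = 0 then l 0 else 0

lemma key_identity (n : ℕ) (l : ℕ → ℕ) (hmono : ∀ i j, i ≤ j → l j ≤ l i) :
    ∑ μ ∈ Fintype.piFinset (fun i : Fin n => Icc (l ((i:ℕ) + 2)) (l ((i:ℕ) + 1))),
      Dprod n (extFun l n μ) = Dprod (n + 1) l := by
  classical
  have ha : ∀ i : Fin n,
      (fun i : Fin (n+1) => l (n + 1 - (i:ℕ)) + (i:ℕ)) i.castSucc
        < (fun i : Fin (n+1) => l (n + 1 - (i:ℕ)) + (i:ℕ)) i.succ := by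
    intro i
    have hi := i.isLt
    simp only [Fin.coe_castSucc, Fin.val_succ]
    have h1 : l (n + 1 - (i:ℕ)) ≤ l (n + 1 - ((i:ℕ) + 1)) := hmono _ _ (by omega)
    omega
  have hμform : ∀ μ : Fin n → ℕ,
      Dprod n (extFun l n μ)
        = vd n (fun i => ((μ (Fin.rev i) + (i:ℕ) : ℕ) : ℚ)) / sfQ n := by
    intro μ
    rw [D_eq]
    congr 2
    funext i
    have hi := i.isLt
    have hcond : 1 ≤ n - (i:ℕ) ∧ n - (i:ℕ) ≤ n := by omega
    have he : extFun l n μ (n - (i:ℕ)) = μ (Fin.rev i) := by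
      rw [extFun, dif_pos hcond]
      exact congrArg μ (Fin.ext (by simp only [Fin.val_rev]; omega))
    rw [he]
  have hsum : ∑ μ ∈ Fintype.piFinset (fun i : Fin n => Icc (l ((i:ℕ) + 2)) (l ((i:ℕ) + 1))),
        vd n (fun i => ((μ (Fin.rev i) + (i:ℕ) : ℕ) : ℚ))
      = ∑ b ∈ Fintype.piFinset (fun i : Fin n =>
          Icc ((fun i : Fin (n+1) => l (n + 1 - (i:ℕ)) + (i:ℕ)) i.castSucc)
              ((fun i : Fin (n+1) => l (n + 1 - (i:ℕ)) + (i:ℕ)) i.succ - 1)),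
        vd n (fun i => ((b i : ℕ) : ℚ)) := by
    refine Finset.sum_nbij' (fun μ => fun i : Fin n => μ (Fin.rev i) + (i:ℕ))
      (fun b => fun k : Fin n => b (Fin.rev k) - ((Fin.rev k : Fin n) : ℕ)) ?_ ?_ ?_ ?_ ?_
    · intro μ hμ
      rw [Fintype.mem_piFinset] at hμ ⊢
      intro i
      have hi := i.isLt
      have h := hμ (Fin.rev i)
      rw [Finset.mem_Icc] at h ⊢
      simp only [Fin.val_rev] at h
      simp only [Fin.coe_castSucc, Fin.val_succ]
      have e1 : n - ((i:ℕ) + 1) + 2 = n + 1 - (i:ℕ) := by omega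
      have e2 : n - ((i:ℕ) + 1) + 1 = n + 1 - ((i:ℕ) + 1) := by omega
      rw [e1, e2] at h
      omega
    · intro b hb
      rw [Fintype.mem_piFinset] at hb ⊢
      intro k
      have hk := k.isLt
      have h := hb (Fin.rev k)
      rw [Finset.mem_Icc] at h ⊢
      simp only [Fin.coe_castSucc, Fin.val_succ, Fin.val_rev] at h ⊢
      have e1 : n + 1 - (n - ((k:ℕ) + 1)) = (k:ℕ) + 2 := by omega
      have e2 : n + 1 - (n - ((k:ℕ) + 1) + 1) = (k:ℕ) + 1 := by omega
      rw [e1, e2] at h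
      omega
    · intro μ hμ
      funext k
      simp only [Fin.rev_rev]
      omega
    · intro b hb
      rw [Fintype.mem_piFinset] at hb
      funext i
      simp only [Fin.rev_rev]
      have h := hb i
      rw [Finset.mem_Icc] at h
      simp only [Fin.coe_castSucc] at h
      have hi := i.isLt
      omega
    · intro μ hμ
      rfl
  have hvdm := vandermonde_sum n (fun i : Fin (n+1) => l (n + 1 - (i:ℕ)) + (i:ℕ)) ha
  rw [← vd_eq_det] at hvdm
  have hcast : ∀ b : Fin n → ℕ, Matrix.det (Matrix.vandermonde fun i => ((b i : ℕ) : ℚ))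
      = vd n (fun i => ((b i : ℕ) : ℚ)) := fun b => (vd_eq_det n _).symm
  simp only [hcast] at hvdm
  have hfac : (Nat.factorial n : ℚ) ≠ 0 := by exact_mod_cast Nat.factorial_ne_zero n
  have hsf : sfQ n ≠ 0 := ne_of_gt (sfQ_pos n)
  calc ∑ μ ∈ Fintype.piFinset (fun i : Fin n => Icc (l ((i:ℕ) + 2)) (l ((i:ℕ) + 1))),
        Dprod n (extFun l n μ)
      = (∑ μ ∈ Fintype.piFinset (fun i : Fin n => Icc (l ((i:ℕ) + 2)) (l ((i:ℕ) + 1))),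
          vd n (fun i => ((μ (Fin.rev i) + (i:ℕ) : ℕ) : ℚ))) / sfQ n := by
        rw [Finset.sum_div]
        exact Finset.sum_congr rfl fun μ _ => hμform μ
    _ = vd (n+1) (fun i => ((l (n + 1 - (i:ℕ)) + (i:ℕ) : ℕ) : ℚ)) / (Nat.factorial n : ℚ) / sfQ n := by
        rw [hsum]
        congr 1
        -- Σ b vd = vd(n+1)/n!
        rw [eq_div_iff hfac, mul_comm]
        exact hvdm.symm
    _ = Dprod (n + 1) l := by
        rw [D_eq (n+1) l, sfQ_succ, div_div, mul_comm]

section Comb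

lemma mem_youngCells {l : ℕ → ℕ} {p : ℕ × ℕ} :
    p ∈ youngCells l ↔ 1 ≤ p.1 ∧ 1 ≤ p.2 ∧ p.2 ≤ l p.1 := Iff.rfl

/-- entries weakly increase along a row. -/
lemma ssyt_row_le {l : ℕ → ℕ} {M : ℕ} {T : ℕ × ℕ → ℕ} (hT : IsSSYT l M T)
    {i j j' : ℕ} (hi : 1 ≤ i) (hj : 1 ≤ j) (hjj : j ≤ j') (hj' : j' ≤ l i) :
    T (i, j) ≤ T (i, j') := by
  induction j', hjj using Nat.le_induction with
  | base => exact le_rfl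
  | succ k hk ih =>
      have h1 : k ≤ l i := by omega
      refine le_trans (ih h1) (hT.2.1 i k ⟨hi, ?_, ?_⟩ ⟨hi, ?_, ?_⟩)
      · show 1 ≤ k; omega
      · show k ≤ l i; omega
      · show 1 ≤ k + 1; omega
      · show k + 1 ≤ l i; omega

/-- entries in row `i` are at least `i`. -/
lemma ssyt_col_ge {l : ℕ → ℕ} {M : ℕ} {T : ℕ × ℕ → ℕ} (hT : IsSSYT l M T)
    (hmono : ∀ i j, i ≤ j → l j ≤ l i) :
    ∀ i j : ℕ, (i, j) ∈ youngCells l → i ≤ T (i, j) := by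
  intro i
  induction i with
  | zero => intro j _; omega
  | succ k ih =>
      intro j hc
      rcases Nat.eq_zero_or_pos k with rfl | hk
      · exact (hT.1 _ hc).1
      · have hc' : (k, j) ∈ youngCells l := by
          obtain ⟨h1, h2, h3⟩ := hc
          exact ⟨hk, h2, le_trans h3 (hmono k (k+1) (by omega))⟩
        have := hT.2.2.1 k j hc' hc
        have := ih j hc'
        omega

lemma ssyt_finite (l : ℕ → ℕ) (M : ℕ) (hmono : ∀ i j, i ≤ j → l j ≤ l i)
    (hlen : ∀ i, M < i → l i = 0) :
    Finite {T : ℕ × ℕ → ℕ // IsSSYT l M T} := by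
  classical
  set box : Finset (ℕ × ℕ) := Icc 1 M ×ˢ Icc 1 (l 1) with hbox
  have hcell_box : ∀ p ∈ youngCells l, p ∈ box := by
    rintro ⟨i, j⟩ hc
    obtain ⟨h1, h2, h3⟩ := hc
    simp only at h1 h2 h3
    have hi : i ≤ M := by
      by_contra h
      have := hlen i (by omega)
      omega
    have hj : j ≤ l 1 := le_trans h3 (hmono 1 i h1)
    simp only [hbox, Finset.mem_product, Finset.mem_Icc]
    exact ⟨⟨h1, hi⟩, ⟨h2, hj⟩⟩
  have hinj : Function.Injective
      (fun T : {T : ℕ × ℕ → ℕ // IsSSYT l M T} =>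
        (fun q : {x // x ∈ box} => (⟨T.1 q.1, by
          by_cases hq : (q.1 : ℕ × ℕ) ∈ youngCells l
          · have := T.2.1 q.1 hq
            simp only [Set.mem_Icc] at this
            omega
          · rw [T.2.2.2.2 q.1 hq]
            omega⟩ : Fin (M + 1)))) := by
    rintro ⟨T₁, h₁⟩ ⟨T₂, h₂⟩ h
    ext p
    show T₁ p = T₂ p
    by_cases hp : p ∈ box
    · have := congrFun h ⟨p, hp⟩
      simpa using congrArg Fin.val this
    · have hp₁ : p ∉ youngCells l := fun hc => hp (hcell_box p hc)
      rw [h₁.2.2.2 p hp₁, h₂.2.2.2 p hp₁]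
  exact Finite.of_injective _ hinj

lemma downclosed_eq_Icc {m : ℕ} (F : Finset ℕ) (hF : F ⊆ Icc 1 m)
    (hdc : ∀ j ∈ F, ∀ j', 1 ≤ j' → j' ≤ j → j' ∈ F) : F = Icc 1 F.card := by
  rcases F.eq_empty_or_nonempty with rfl | hne
  · simp
  · set b := F.max' hne with hb
    have hFb : F = Icc 1 b := by
      ext x
      rw [Finset.mem_Icc]
      constructor
      · intro hx
        have := hF hx
        rw [Finset.mem_Icc] at this
        exact ⟨this.1, F.le_max' x hx⟩
      · rintro ⟨hx1, hx2⟩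
        exact hdc b (F.max'_mem hne) x hx1 hx2
    rw [hFb]
    simp [Nat.card_Icc]

/-- number of entries `≤ M` in row `i` (entries of `T` bounded by `M+1`). -/
def rowCount (l : ℕ → ℕ) (M : ℕ) (T : ℕ × ℕ → ℕ) (i : ℕ) : ℕ :=
  ((Icc 1 (l i)).filter (fun j => T (i, j) ≤ M)).card

lemma rowCount_key {l : ℕ → ℕ} {n : ℕ} {T : ℕ × ℕ → ℕ} (hT : IsSSYT l (n + 1) T)
    {i j : ℕ} (hi : 1 ≤ i) (hj1 : 1 ≤ j) (hj2 : j ≤ l i) :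
    (T (i, j) ≤ n ↔ j ≤ rowCount l n T i) := by
  classical
  set F := (Icc 1 (l i)).filter (fun j => T (i, j) ≤ n) with hF
  have hsub : F ⊆ Icc 1 (l i) := Finset.filter_subset _ _
  have hdc : ∀ k ∈ F, ∀ k', 1 ≤ k' → k' ≤ k → k' ∈ F := by
    intro k hk k' h1 h2
    rw [hF, Finset.mem_filter, Finset.mem_Icc] at hk ⊢
    refine ⟨⟨h1, le_trans h2 hk.1.2⟩, ?_⟩
    exact le_trans (ssyt_row_le hT hi h1 h2 hk.1.2) hk.2
  have heq := downclosed_eq_Icc F hsub hdc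
  have hmem : j ∈ F ↔ T (i, j) ≤ n := by
    rw [hF, Finset.mem_filter, Finset.mem_Icc]
    constructor
    · exact fun h => h.2
    · exact fun h => ⟨⟨hj1, hj2⟩, h⟩
  rw [← hmem, heq, Finset.mem_Icc, rowCount]
  constructor
  · exact fun h => h.2
  · exact fun h => ⟨hj1, h⟩

lemma rowCount_le (l : ℕ → ℕ) (M : ℕ) (T : ℕ × ℕ → ℕ) (i : ℕ) :
    rowCount l M T i ≤ l i := by
  rw [rowCount]
  calc ((Icc 1 (l i)).filter _).card ≤ (Icc 1 (l i)).card := Finset.card_filter_le _ _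
    _ = l i := by rw [Nat.card_Icc]; omega

lemma rowCount_lower {l : ℕ → ℕ} {n : ℕ} {T : ℕ × ℕ → ℕ} (hT : IsSSYT l (n + 1) T)
    (hmono : ∀ i j, i ≤ j → l j ≤ l i) {i : ℕ} (hi : 1 ≤ i) :
    l (i + 1) ≤ rowCount l n T i := by
  rcases Nat.eq_zero_or_pos (l (i + 1)) with h0 | h0
  · omega
  · set j := l (i + 1) with hj
    have hc1 : (i + 1, j) ∈ youngCells l := ⟨by omega, h0, le_refl _⟩
    have hc0 : (i, j) ∈ youngCells l :=
      ⟨hi, h0, le_trans (le_refl _) (hmono i (i+1) (by omega))⟩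
    have hstrict := hT.2.2.1 i j hc0 hc1
    have hub := (hT.1 _ hc1).2
    have : T (i, j) ≤ n := by omega
    exact (rowCount_key hT hi h0 (hmono i (i+1) (by omega))).mp this

end Comb


section ExtFun
variable {l : ℕ → ℕ} {n : ℕ} {μ : Fin n → ℕ}

lemma extFun_val {k : ℕ} (h1 : 1 ≤ k) (h2 : k ≤ n) :
    extFun l n μ k = μ ⟨k - 1, by omega⟩ := by
  rw [extFun, dif_pos ⟨h1, h2⟩]

lemma extFun_zero : extFun l n μ 0 = l 0 := by
  rw [extFun, dif_neg (by omega)]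
  simp

lemma extFun_len {k : ℕ} (h : n < k) : extFun l n μ k = 0 := by
  rw [extFun, dif_neg (by omega), if_neg (by omega)]

variable (hmono : ∀ i j, i ≤ j → l j ≤ l i)
variable (hμ : ∀ i : Fin n, l ((i:ℕ) + 2) ≤ μ i ∧ μ i ≤ l ((i:ℕ) + 1))
include hμ

lemma extFun_le : ∀ k, extFun l n μ k ≤ l k := by
  intro k
  rcases Nat.eq_zero_or_pos k with rfl | hk
  · rw [extFun_zero]
  · by_cases h2 : k ≤ n
    · rw [extFun_val hk h2]
      have := (hμ ⟨k - 1, by omega⟩).2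
      simp only at this
      have he : k - 1 + 1 = k := by omega
      rwa [he] at this
    · rw [extFun_len (by omega)]; omega

lemma extFun_ge {k : ℕ} (h1 : 1 ≤ k) (h2 : k ≤ n) : l (k + 1) ≤ extFun l n μ k := by
  rw [extFun_val h1 h2]
  have := (hμ ⟨k - 1, by omega⟩).1
  simp only at this
  have he : k - 1 + 2 = k + 1 := by omega
  rwa [he] at this

include hmono in
lemma extFun_anti : ∀ i j, i ≤ j → extFun l n μ j ≤ extFun l n μ i := by
  have hadj : ∀ k, extFun l n μ (k + 1) ≤ extFun l n μ k := by
    intro k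
    rcases Nat.eq_zero_or_pos k with rfl | hk
    · rw [extFun_zero]
      by_cases hn : 1 ≤ n
      · exact le_trans (extFun_le hμ 1) (hmono 0 1 (by omega))
      · rw [extFun_len (by omega)]; omega
    · by_cases h2 : k + 1 ≤ n
      · calc extFun l n μ (k + 1) ≤ l (k + 1) := extFun_le hμ _
          _ ≤ extFun l n μ k := extFun_ge hμ hk (by omega)
      · rw [extFun_len (by omega)]; omega
  intro i j hij
  induction j, hij using Nat.le_induction with
  | base => exact le_rfl
  | succ k hk ih => exact le_trans (hadj k) ih

end ExtFun

/-- restriction of a tableau to a smaller shape -/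
def restrictT (m : ℕ → ℕ) (T : ℕ × ℕ → ℕ) : ℕ × ℕ → ℕ :=
  fun p => if 1 ≤ p.1 ∧ 1 ≤ p.2 ∧ p.2 ≤ m p.1 then T p else 0

/-- extension of a tableau by filling `λ/μ` with the maximal entry -/
def extendT (l m : ℕ → ℕ) (M : ℕ) (T : ℕ × ℕ → ℕ) : ℕ × ℕ → ℕ :=
  fun p => if 1 ≤ p.1 ∧ 1 ≤ p.2 ∧ p.2 ≤ l p.1 then (if p.2 ≤ m p.1 then T p else M) else 0

lemma sigma_subtype_eq {n : ℕ} {Q : (Fin n → ℕ) → Prop} {S : (Fin n → ℕ) → (ℕ × ℕ → ℕ) → Prop}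
    (x y : Σ μ : {m // Q m}, {T // S μ.1 T}) (h1 : x.1.1 = y.1.1) (h2 : x.2.1 = y.2.1) :
    x = y := by
  obtain ⟨⟨a, ha⟩, ⟨b, hb⟩⟩ := x
  obtain ⟨⟨c, hc⟩, ⟨d, hd⟩⟩ := y
  dsimp only at h1 h2
  subst h1
  subst h2
  rfl

lemma extendT_in {l m : ℕ → ℕ} {M : ℕ} {T : ℕ × ℕ → ℕ} {p : ℕ × ℕ}
    (h : 1 ≤ p.1 ∧ 1 ≤ p.2 ∧ p.2 ≤ l p.1) (h2 : p.2 ≤ m p.1) :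
    extendT l m M T p = T p := by
  rw [extendT, if_pos h, if_pos h2]

lemma extendT_out {l m : ℕ → ℕ} {M : ℕ} {T : ℕ × ℕ → ℕ} {p : ℕ × ℕ}
    (h : 1 ≤ p.1 ∧ 1 ≤ p.2 ∧ p.2 ≤ l p.1) (h2 : ¬ p.2 ≤ m p.1) :
    extendT l m M T p = M := by
  rw [extendT, if_pos h, if_neg h2]

lemma extendT_zero {l m : ℕ → ℕ} {M : ℕ} {T : ℕ × ℕ → ℕ} {p : ℕ × ℕ}
    (h : ¬ (1 ≤ p.1 ∧ 1 ≤ p.2 ∧ p.2 ≤ l p.1)) :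
    extendT l m M T p = 0 := by
  rw [extendT, if_neg h]

lemma restrictT_in {m : ℕ → ℕ} {T : ℕ × ℕ → ℕ} {p : ℕ × ℕ}
    (h : 1 ≤ p.1 ∧ 1 ≤ p.2 ∧ p.2 ≤ m p.1) : restrictT m T p = T p := by
  rw [restrictT, if_pos h]

lemma restrictT_zero {m : ℕ → ℕ} {T : ℕ × ℕ → ℕ} {p : ℕ × ℕ}
    (h : ¬ (1 ≤ p.1 ∧ 1 ≤ p.2 ∧ p.2 ≤ m p.1)) : restrictT m T p = 0 := by
  rw [restrictT, if_neg h]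

section Bij
variable {l : ℕ → ℕ} {n : ℕ}

lemma mu_mem (hmono : ∀ i j, i ≤ j → l j ≤ l i) {T : ℕ × ℕ → ℕ} (hT : IsSSYT l (n + 1) T) :
    ∀ i : Fin n, l ((i:ℕ) + 2) ≤ rowCount l n T ((i:ℕ) + 1)
      ∧ rowCount l n T ((i:ℕ) + 1) ≤ l ((i:ℕ) + 1) := by
  intro i
  constructor
  · have h := rowCount_lower hT hmono (i := (i:ℕ) + 1) (by omega)
    have he : (i:ℕ) + 1 + 1 = (i:ℕ) + 2 := by omega
    rwa [he] at h
  · exact rowCount_le l n T _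

lemma forward_ssyt (hmono : ∀ i j, i ≤ j → l j ≤ l i) {T : ℕ × ℕ → ℕ}
    (hT : IsSSYT l (n + 1) T) :
    IsSSYT (extFun l n (fun i => rowCount l n T ((i:ℕ) + 1))) n
      (restrictT (extFun l n (fun i => rowCount l n T ((i:ℕ) + 1))) T) := by
  set μT := fun i : Fin n => rowCount l n T ((i:ℕ) + 1) with hμT
  set m := extFun l n μT with hm
  have hμ : ∀ i : Fin n, l ((i:ℕ) + 2) ≤ μT i ∧ μT i ≤ l ((i:ℕ) + 1) := mu_mem hmono hT
  have hmle : ∀ k, m k ≤ l k := extFun_le hμ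
  have hsub : ∀ p : ℕ × ℕ, p ∈ youngCells m → p ∈ youngCells l := by
    rintro ⟨i, j⟩ hp
    obtain ⟨h1, h2, h3⟩ := hp
    exact ⟨h1, h2, le_trans h3 (hmle i)⟩
  have hmval : ∀ k, 1 ≤ k → k ≤ n → m k = rowCount l n T k := by
    intro k h1 h2
    rw [hm, extFun_val h1 h2]
    show rowCount l n T ((k - 1) + 1) = rowCount l n T k
    congr 1
    omega
  have hrestr : ∀ p ∈ youngCells m, restrictT m T p = T p := by
    intro p hp
    exact restrictT_in hp
  refine ⟨?_, ?_, ?_, ?_⟩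
  · intro p hp
    rw [hrestr p hp]
    obtain ⟨h1, h2, h3⟩ := hp
    have hp1n : p.1 ≤ n := by
      by_contra hgt
      have h0 : m p.1 = 0 := by
        rw [hm]
        exact extFun_len (by omega)
      omega
    have hlow := (hT.1 p (hsub p ⟨h1, h2, h3⟩)).1
    have hup : T p ≤ n := by
      have hkey := rowCount_key hT h1 h2 (le_trans h3 (hmle p.1))
      rw [← hmval p.1 h1 hp1n] at hkey
      exact hkey.mpr h3
    exact Set.mem_Icc.mpr ⟨hlow, by simpa using hup⟩
  · intro i j hc hc2
    rw [hrestr _ hc, hrestr _ hc2]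
    exact hT.2.1 i j (hsub _ hc) (hsub _ hc2)
  · intro i j hc hc2
    rw [hrestr _ hc, hrestr _ hc2]
    exact hT.2.2.1 i j (hsub _ hc) (hsub _ hc2)
  · intro p hp
    exact restrictT_zero hp

lemma backward_ssyt (hmono : ∀ i j, i ≤ j → l j ≤ l i) (hlen : ∀ i, n + 1 < i → l i = 0)
    {μ : Fin n → ℕ} (hμ : ∀ i : Fin n, l ((i:ℕ) + 2) ≤ μ i ∧ μ i ≤ l ((i:ℕ) + 1))
    {T' : ℕ × ℕ → ℕ} (hT' : IsSSYT (extFun l n μ) n T') :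
    IsSSYT l (n + 1) (extendT l (extFun l n μ) (n + 1) T') := by
  set m := extFun l n μ with hm
  have hge : ∀ k, 1 ≤ k → k ≤ n → l (k + 1) ≤ m k := fun k h1 h2 => extFun_ge hμ h1 h2
  refine ⟨?_, ?_, ?_, ?_⟩
  · intro p hp
    obtain ⟨h1, h2, h3⟩ := hp
    by_cases hpm : p.2 ≤ m p.1
    · rw [extendT_in ⟨h1, h2, h3⟩ hpm]
      have := hT'.1 p ⟨h1, h2, hpm⟩
      simp only [Set.mem_Icc] at this ⊢
      omega
    · rw [extendT_out ⟨h1, h2, h3⟩ hpm]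
      simp only [Set.mem_Icc]
      omega
  · intro i j hc hc2
    obtain ⟨h1, h2, h3⟩ := hc
    obtain ⟨h1', h2', h3'⟩ := hc2
    simp only at h1 h2 h3 h1' h2' h3'
    by_cases hj : j ≤ m i
    · rw [extendT_in ⟨h1, h2, h3⟩ hj]
      by_cases hj2 : j + 1 ≤ m i
      · rw [extendT_in ⟨h1, by omega, h3'⟩ hj2]
        exact hT'.2.1 i j ⟨h1, h2, hj⟩ ⟨h1, by omega, hj2⟩
      · rw [extendT_out ⟨h1, by omega, h3'⟩ hj2]
        have := hT'.1 (i, j) ⟨h1, h2, hj⟩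
        simp only [Set.mem_Icc] at this
        omega
    · rw [extendT_out ⟨h1, h2, h3⟩ hj,
        extendT_out ⟨h1, by omega, h3'⟩ (show ¬ (i, j+1).2 ≤ m (i, j+1).1 by simp only; omega)]
  · intro i j hc hc2
    obtain ⟨h1, h2, h3⟩ := hc
    obtain ⟨h1', h2', h3'⟩ := hc2
    simp only at h1 h2 h3 h1' h2' h3'
    have hin : i ≤ n := by
      by_contra hgt
      have := hlen (i + 1) (by omega)
      omega
    have hjm : j ≤ m i := le_trans h3' (hge i h1 hin)
    rw [extendT_in ⟨h1, h2, h3⟩ hjm]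
    by_cases hj2 : j ≤ m (i + 1)
    · rw [extendT_in ⟨by omega, h2, h3'⟩ hj2]
      exact hT'.2.2.1 i j ⟨h1, h2, hjm⟩ ⟨by omega, h2, hj2⟩
    · rw [extendT_out ⟨by omega, h2, h3'⟩ hj2]
      have := hT'.1 (i, j) ⟨h1, h2, hjm⟩
      simp only [Set.mem_Icc] at this
      omega
  · intro p hp
    exact extendT_zero hp

lemma left_inv_eq (hmono : ∀ i j, i ≤ j → l j ≤ l i) (hlen : ∀ i, n + 1 < i → l i = 0)
    {T : ℕ × ℕ → ℕ} (hT : IsSSYT l (n + 1) T) :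
    extendT l (extFun l n (fun i => rowCount l n T ((i:ℕ) + 1))) (n + 1)
      (restrictT (extFun l n (fun i => rowCount l n T ((i:ℕ) + 1))) T) = T := by
  set μT := fun i : Fin n => rowCount l n T ((i:ℕ) + 1) with hμT
  set m := extFun l n μT with hm
  have hμ : ∀ i : Fin n, l ((i:ℕ) + 2) ≤ μT i ∧ μT i ≤ l ((i:ℕ) + 1) := mu_mem hmono hT
  have hmle : ∀ k, m k ≤ l k := extFun_le hμ
  have hmval : ∀ k, 1 ≤ k → k ≤ n → m k = rowCount l n T k := by
    intro k h1 h2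
    rw [hm, extFun_val h1 h2]
    show rowCount l n T ((k - 1) + 1) = rowCount l n T k
    congr 1
    omega
  funext p
  by_cases hp : 1 ≤ p.1 ∧ 1 ≤ p.2 ∧ p.2 ≤ l p.1
  · obtain ⟨h1, h2, h3⟩ := hp
    by_cases hpm : p.2 ≤ m p.1
    · rw [extendT_in ⟨h1, h2, h3⟩ hpm, restrictT_in ⟨h1, h2, hpm⟩]
    · rw [extendT_out ⟨h1, h2, h3⟩ hpm]
      have hub := (hT.1 p ⟨h1, h2, h3⟩).2
      have hp1 : p.1 ≤ n + 1 := by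
        by_contra hgt
        have := hlen p.1 (by omega)
        omega
      rcases Nat.lt_or_ge p.1 (n + 1) with hlt | hge2
      · have hkey := rowCount_key hT h1 h2 h3
        rw [← hmval p.1 h1 (by omega)] at hkey
        have : ¬ T p ≤ n := fun hc => hpm (hkey.mp (by
          rcases p with ⟨a, b⟩
          exact hc))
        rcases p with ⟨a, b⟩
        omega
      · have hcg := ssyt_col_ge hT hmono p.1 p.2 ⟨h1, h2, h3⟩
        rcases p with ⟨a, b⟩
        simp only at hcg hub ⊢
        omega
  · rw [extendT_zero hp, (hT.2.2.2 p hp).symm]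

lemma mu_recover
    {μ : Fin n → ℕ} (hμ : ∀ i : Fin n, l ((i:ℕ) + 2) ≤ μ i ∧ μ i ≤ l ((i:ℕ) + 1))
    {T' : ℕ × ℕ → ℕ} (hT' : IsSSYT (extFun l n μ) n T') :
    ∀ k, 1 ≤ k → k ≤ n →
      rowCount l n (extendT l (extFun l n μ) (n + 1) T') k = extFun l n μ k := by
  intro k h1 h2
  set m := extFun l n μ with hm
  set T := extendT l m (n + 1) T' with hTdef
  have hmlek : m k ≤ l k := extFun_le hμ k
  have hfe : (Icc 1 (l k)).filter (fun j => T (k, j) ≤ n) = Icc 1 (m k) := by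
    ext j
    rw [Finset.mem_filter, Finset.mem_Icc, Finset.mem_Icc]
    constructor
    · rintro ⟨⟨hj1, hjlk⟩, hTle⟩
      refine ⟨hj1, ?_⟩
      by_contra hgt
      have : T (k, j) = n + 1 := by
        rw [hTdef]
        exact extendT_out ⟨h1, hj1, hjlk⟩ (by simp only; omega)
      omega
    · rintro ⟨hj1, hjm⟩
      have hjlk : j ≤ l k := le_trans hjm hmlek
      refine ⟨⟨hj1, hjlk⟩, ?_⟩
      have hv : T (k, j) = T' (k, j) := by
        rw [hTdef]
        exact extendT_in ⟨h1, hj1, hjlk⟩ hjm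
      rw [hv]
      exact ((hT'.1 (k, j) ⟨h1, hj1, hjm⟩).2 : T' (k, j) ≤ n)
  rw [rowCount, hfe, Nat.card_Icc]
  omega

end Bij

lemma card_step (n : ℕ) (l : ℕ → ℕ) (hmono : ∀ i j, i ≤ j → l j ≤ l i)
    (hlen : ∀ i, n + 1 < i → l i = 0) :
    Nat.card {T : ℕ × ℕ → ℕ // IsSSYT l (n + 1) T}
      = ∑ μ ∈ Fintype.piFinset (fun i : Fin n => Icc (l ((i:ℕ) + 2)) (l ((i:ℕ) + 1))),
          Nat.card {T : ℕ × ℕ → ℕ // IsSSYT (extFun l n μ) n T} := by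
  classical
  set P := Fintype.piFinset (fun i : Fin n => Icc (l ((i:ℕ) + 2)) (l ((i:ℕ) + 1))) with hP
  have hPmem : ∀ {μ : Fin n → ℕ}, μ ∈ P ↔
      ∀ i : Fin n, l ((i:ℕ) + 2) ≤ μ i ∧ μ i ≤ l ((i:ℕ) + 1) := by
    intro μ
    rw [hP, Fintype.mem_piFinset]
    simp only [Finset.mem_Icc]
  let e : {T : ℕ × ℕ → ℕ // IsSSYT l (n + 1) T}
      ≃ (Σ μ : {x // x ∈ P}, {T : ℕ × ℕ → ℕ // IsSSYT (extFun l n μ.1) n T}) :=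
    { toFun := fun T =>
        ⟨⟨fun i => rowCount l n T.1 ((i:ℕ) + 1), hPmem.mpr (mu_mem hmono T.2)⟩,
         ⟨restrictT (extFun l n (fun i => rowCount l n T.1 ((i:ℕ) + 1))) T.1,
          forward_ssyt hmono T.2⟩⟩
      invFun := fun q =>
        ⟨extendT l (extFun l n q.1.1) (n + 1) q.2.1,
         backward_ssyt hmono hlen (hPmem.mp q.1.2) q.2.2⟩
      left_inv := fun T => Subtype.ext (left_inv_eq hmono hlen T.2)
      right_inv := fun q => by
        have hμq := hPmem.mp q.1.2
        have hrec := mu_recover hμq q.2.2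
        have hμeq : (fun i : Fin n =>
            rowCount l n (extendT l (extFun l n q.1.1) (n + 1) q.2.1) ((i:ℕ) + 1)) = q.1.1 := by
          funext i
          rw [hrec ((i:ℕ) + 1) (by omega) (by have := i.isLt; omega),
            extFun_val (by omega) (by have := i.isLt; omega)]
          exact congrArg q.1.1 (Fin.ext (by simp))
        refine sigma_subtype_eq (Q := fun m => m ∈ P)
          (S := fun m T => IsSSYT (extFun l n m) n T) _ q hμeq ?_
        show restrictT (extFun l n (fun i : Fin n =>
            rowCount l n (extendT l (extFun l n q.1.1) (n + 1) q.2.1) ((i:ℕ) + 1)))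
              (extendT l (extFun l n q.1.1) (n + 1) q.2.1) = q.2.1
        rw [hμeq]
        set m := extFun l n q.1.1 with hm
        have hmle : ∀ k, m k ≤ l k := extFun_le hμq
        funext p
        by_cases hp : 1 ≤ p.1 ∧ 1 ≤ p.2 ∧ p.2 ≤ m p.1
        · rw [restrictT_in hp]
          exact extendT_in ⟨hp.1, hp.2.1, le_trans hp.2.2 (hmle p.1)⟩ hp.2.2
        · rw [restrictT_zero hp, (q.2.2.2.2.2 p hp).symm] }
  haveI hfin : ∀ μ : {x // x ∈ P}, Finite {T : ℕ × ℕ → ℕ // IsSSYT (extFun l n μ.1) n T} :=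
    fun μ => ssyt_finite _ n (extFun_anti hmono (hPmem.mp μ.2))
      (fun i hi => extFun_len hi)
  letI inst : ∀ μ : {x // x ∈ P}, Fintype {T : ℕ × ℕ → ℕ // IsSSYT (extFun l n μ.1) n T} :=
    fun μ => Fintype.ofFinite _
  rw [Nat.card_congr e, Nat.card_eq_fintype_card, Fintype.card_sigma]
  rw [← Finset.sum_coe_sort P
    (fun μ => Nat.card {T : ℕ × ℕ → ℕ // IsSSYT (extFun l n μ) n T})]
  exact Finset.sum_congr rfl fun μ _ => (Nat.card_eq_fintype_card).symm

lemma card_base (l : ℕ → ℕ) (hlen : ∀ i, 0 < i → l i = 0) :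
    Nat.card {T : ℕ × ℕ → ℕ // IsSSYT l 0 T} = 1 := by
  have hcells : ∀ p : ℕ × ℕ, p ∉ youngCells l := by
    rintro ⟨i, j⟩ hc
    obtain ⟨h1, h2, h3⟩ := hc
    simp only at h1 h2 h3
    rw [hlen i h1] at h3
    omega
  haveI : Unique {T : ℕ × ℕ → ℕ // IsSSYT l 0 T} :=
    { default := ⟨fun _ => 0,
        ⟨fun p hp => absurd hp (hcells p),
         fun i j hc _ => absurd hc (hcells _),
         fun i j hc _ => absurd hc (hcells _),
         fun _ _ => rfl⟩⟩
      uniq := by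
        rintro ⟨T, hT⟩
        apply Subtype.ext
        funext p
        exact hT.2.2.2 p (hcells p) }
  exact Nat.card_unique


theorem ssyt_count_aux : ∀ (M : ℕ) (l : ℕ → ℕ),
    (∀ i j, i ≤ j → l j ≤ l i) → (∀ i, M < i → l i = 0) →
    (Nat.card {T : ℕ × ℕ → ℕ // IsSSYT l M T} : ℚ) = Dprod M l := by
  intro M
  induction M with
  | zero =>
      intro l hmono hlen
      rw [card_base l (fun i hi => hlen i hi), Dprod]
      simp
  | succ n ih =>
      intro l hmono hlen
      rw [card_step n l hmono hlen, Nat.cast_sum]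
      rw [Finset.sum_congr rfl (fun μ hμ => ih (extFun l n μ)
        (extFun_anti hmono (fun i => by
          have := Fintype.mem_piFinset.mp hμ i
          rwa [Finset.mem_Icc] at this))
        (fun i hi => extFun_len hi))]
      exact key_identity n l hmono

/-- the number of semistandard Young tableaux of shape `λ` (at most `M` parts)
with entries in `{1,…,M}` equals `∏_{1≤i<j≤M} (λ_i − λ_j + j − i)/(j − i)`. -/
theorem ssyt_count
    (M : ℕ) (l : ℕ → ℕ) (hmono : ∀ i j, i ≤ j → l j ≤ l i)
    (hlen : ∀ i, M < i → l i = 0) :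
    (Nat.card {T : ℕ × ℕ → ℕ // IsSSYT l M T} : ℚ) =
      ∏ j ∈ Finset.Icc 1 M, ∏ i ∈ Finset.Icc 1 (j - 1),
        ((l i : ℚ) - (l j : ℚ) + (j : ℚ) - (i : ℚ)) / ((j : ℚ) - (i : ℚ)) := by
  have h := ssyt_count_aux M l hmono hlen
  rw [Dprod] at h
  exact h
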